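/- In dimension d = 1, let m(x) = (α/2)x² for some α > 0. Then for every μ ∈ ℝ and σ > 0, the Fisher operator maps the Gaussian density γ_{μ,σ²} to a positive multiple of the Gaussian density γ_{μ̃,σ̃²}, where μ̃ = μ / (1 + α(1 + σ²/2)) and σ̃² = (1 + σ²/2) / (1 + α(1 + σ²/2)). -/

import Mathlib

open MeasureTheory
open Real

noncomputable section

/-- The Gaussian probability density on `ℝ` with mean `m` and variance `v`. -/
noncomputable def gauss1 (m v : ℝ) (x : ℝ) : ℝ :=
  (Real.sqrt (2 * Real.pi * v))⁻¹ * Real.exp (-(x - m) ^ 2 / (2 * v))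

lemma gauss1_nonneg (m v x : ℝ) : 0 ≤ gauss1 m v x := by
  unfold gauss1; positivity

lemma gauss1_rw (m : ℝ) {v : ℝ} (hv : 0 < v) :
    gauss1 m v = fun x => (Real.sqrt (2 * π * v))⁻¹ * Real.exp (-(1/(2*v)) * (x - m) ^ 2) := by
  funext x
  unfold gauss1
  congr 1
  congr 1
  field_simp

lemma integrable_gauss1 (m : ℝ) {v : ℝ} (hv : 0 < v) : Integrable (gauss1 m v) := by
  rw [gauss1_rw m hv]
  exact ((integrable_exp_neg_mul_sq (by positivity)).comp_sub_right m).const_mul _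

lemma continuous_gauss1 (m v : ℝ) : Continuous (gauss1 m v) := by
  unfold gauss1
  fun_prop

lemma integral_gauss1 (m : ℝ) {v : ℝ} (hv : 0 < v) : ∫ x, gauss1 m v x = 1 := by
  rw [gauss1_rw m hv, integral_const_mul,
    integral_sub_right_eq_self (fun x => Real.exp (-(1/(2*v)) * x ^ 2)) m,
    integral_gaussian, show π / (1/(2*v)) = 2 * π * v by field_simp,
    inv_mul_cancel₀ (by positivity)]

lemma gauss1_conv (a b x : ℝ) {v w : ℝ} (hv : 0 < v) (hw : 0 < w) :
    ∫ t, gauss1 a v (x - t) * gauss1 b w t = gauss1 (a + b) (v + w) x := by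
  have hvw : 0 < v + w := by linarith
  have hv' := hv.ne'
  have hw' := hw.ne'
  have hvw' := hvw.ne'
  set u := v * w / (v + w) with hu
  have hu0 : 0 < u := by positivity
  set t0 := ((x - a) * w + b * v) / (v + w) with ht0
  have key : ∀ t : ℝ, gauss1 a v (x - t) * gauss1 b w t
      = ((Real.sqrt (2*π*v))⁻¹ * (Real.sqrt (2*π*w))⁻¹
          * Real.exp (-(x - (a + b)) ^ 2 / (2 * (v + w))))
        * Real.exp (-(1/(2*u)) * (t - t0) ^ 2) := by
    intro t
    have hE : -(x - t - a) ^ 2 / (2*v) + -(t - b) ^ 2 / (2*w)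
        = -(x - (a + b)) ^ 2 / (2 * (v + w)) + -(1/(2*u)) * (t - t0) ^ 2 := by
      rw [hu, ht0]; field_simp; ring
    unfold gauss1
    rw [mul_mul_mul_comm, ← Real.exp_add, hE, Real.exp_add]
    ring
  simp_rw [key]
  rw [integral_const_mul,
    integral_sub_right_eq_self (fun t => Real.exp (-(1/(2*u)) * t ^ 2)) t0,
    integral_gaussian, show π / (1/(2*u)) = 2 * π * u by field_simp]
  have hsq : Real.sqrt (2*π*u) = Real.sqrt (2*π*v) * Real.sqrt (2*π*w) / Real.sqrt (2*π*(v+w)) := by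
    rw [← Real.sqrt_mul (by positivity), ← Real.sqrt_div (by positivity)]
    congr 1
    rw [hu]; field_simp
  rw [hsq]
  unfold gauss1
  have s1 : Real.sqrt (2*π*v) ≠ 0 := by positivity
  have s2 : Real.sqrt (2*π*w) ≠ 0 := by positivity
  have s3 : Real.sqrt (2*π*(v+w)) ≠ 0 := by positivity
  field_simp

lemma gauss1_half (a : ℝ) {w : ℝ} (hw : 0 < w) (m : ℝ) {v : ℝ} (hv : 0 < v) (x : ℝ) :
    ∫ p, gauss1 a w (x - p / 2) * gauss1 m v p = gauss1 (a + m / 2) (w + v / 4) x := by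
  have hpt : ∀ p : ℝ, gauss1 m v p = (1/2) * gauss1 (m/2) (v/4) (p/2) := by
    intro p
    unfold gauss1
    have h4 : Real.sqrt (2*π*(v/4)) = Real.sqrt (2*π*v) / 2 := by
      rw [show (2:ℝ) = Real.sqrt 4 by
        rw [show (4:ℝ) = 2^2 by norm_num, Real.sqrt_sq (by norm_num)],
        ← Real.sqrt_div (by positivity)]
      congr 1; ring
    rw [h4, show -(p/2 - m/2)^2/(2*(v/4)) = -(p - m)^2/(2*v) by field_simp; ring]
    have s1 : Real.sqrt (2*π*v) ≠ 0 := by positivity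
    field_simp
  have step : ∀ p : ℝ, gauss1 a w (x - p / 2) * gauss1 m v p
      = (1/2) * ((fun t => gauss1 a w (x - t) * gauss1 (m/2) (v/4) t) ((1/2) * p)) := by
    intro p
    simp only
    rw [hpt p, show (1/2 : ℝ) * p = p / 2 by ring]
    ring
  simp_rw [step]
  rw [integral_const_mul]
  rw [show (∫ p : ℝ, gauss1 a w (x - 1/2*p) * gauss1 (m/2) (v/4) (1/2*p))
      = ∫ p : ℝ, (fun t => gauss1 a w (x - t) * gauss1 (m/2) (v/4) t) ((1/2)*p) from rfl,
    MeasureTheory.Measure.integral_comp_mul_left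
      (fun t => gauss1 a w (x - t) * gauss1 (m/2) (v/4) t) (1/2)]
  rw [show |((1/2:ℝ))⁻¹| = 2 by rw [abs_of_nonneg] <;> norm_num, smul_eq_mul,
    gauss1_conv a (m/2) x hw (by positivity)]
  ring

/-- Fisher's infinitesimal reproduction operator `R` on `ℝ`. -/
noncomputable def reprod1 (F : ℝ → ℝ) (x : ℝ) : ℝ :=
  (∫ p : ℝ × ℝ, gauss1 0 1 (x - (p.1 + p.2) / 2) * F p.1 * F p.2) / (∫ y, |F y|)

/-- The one-dimensional Fisher infinitesimal model operator `T = S ∘ R`. -/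
noncomputable def fisherT1 (m : ℝ → ℝ) (F : ℝ → ℝ) : ℝ → ℝ :=
  fun x => Real.exp (-(m x)) * reprod1 F x

/-- For quadratic selection `m(x) = (α/2)x²` in dimension 1, the
Fisher operator maps the Gaussian `γ_{μ,σ²}` to a positive multiple of `γ_{μ̃,σ̃²}`,
with `μ̃ = μ/(1 + α(1 + σ²/2))` and `σ̃² = (1 + σ²/2)/(1 + α(1 + σ²/2))`. -/
theorem fisher_maps_gaussian_to_gaussian (α : ℝ) (hα : 0 < α) (μ σ : ℝ) (hσ : 0 < σ) :
    ∃ c : ℝ, 0 < c ∧ ∀ x : ℝ,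
      fisherT1 (fun y => α / 2 * y ^ 2) (gauss1 μ (σ ^ 2)) x
        = c * gauss1 (μ / (1 + α * (1 + σ ^ 2 / 2)))
            ((1 + σ ^ 2 / 2) / (1 + α * (1 + σ ^ 2 / 2))) x := by
  have hs2 : (0:ℝ) < σ ^ 2 := by positivity
  have hFi : Integrable (gauss1 μ (σ ^ 2)) := integrable_gauss1 μ hs2
  have hden : (∫ y, |gauss1 μ (σ ^ 2) y|) = 1 := by
    simp_rw [abs_of_nonneg (gauss1_nonneg _ _ _)]
    exact integral_gauss1 μ hs2
  have hnum : ∀ x : ℝ,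
      (∫ p : ℝ × ℝ, gauss1 0 1 (x - (p.1 + p.2) / 2) * gauss1 μ (σ ^ 2) p.1 * gauss1 μ (σ ^ 2) p.2)
        = gauss1 μ (1 + σ ^ 2 / 2) x := by
    intro x
    have hC : (0:ℝ) ≤ (Real.sqrt (2 * π * 1))⁻¹ := by positivity
    have hint : Integrable
        (fun p : ℝ × ℝ => gauss1 0 1 (x - (p.1 + p.2) / 2) * gauss1 μ (σ ^ 2) p.1
          * gauss1 μ (σ ^ 2) p.2) ((volume : Measure ℝ).prod volume) := by
      have hg : Integrable (fun p : ℝ × ℝ =>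
          (Real.sqrt (2 * π * 1))⁻¹ * (gauss1 μ (σ ^ 2) p.1 * gauss1 μ (σ ^ 2) p.2))
          ((volume : Measure ℝ).prod volume) :=
        (hFi.mul_prod hFi).const_mul _
      refine hg.mono ?_ ?_
      · apply Continuous.aestronglyMeasurable
        exact (((continuous_gauss1 0 1).comp (by fun_prop)).mul
          ((continuous_gauss1 μ (σ ^ 2)).comp continuous_fst)).mul
          ((continuous_gauss1 μ (σ ^ 2)).comp continuous_snd)
      · refine Filter.Eventually.of_forall fun p => ?_
        have h1 := gauss1_nonneg μ (σ ^ 2) p.1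
        have h2 := gauss1_nonneg μ (σ ^ 2) p.2
        have h0 := gauss1_nonneg 0 1 (x - (p.1 + p.2) / 2)
        rw [Real.norm_eq_abs, Real.norm_eq_abs,
          abs_of_nonneg (mul_nonneg (mul_nonneg h0 h1) h2),
          abs_of_nonneg (mul_nonneg hC (mul_nonneg h1 h2))]
        have hle : gauss1 0 1 (x - (p.1 + p.2) / 2) ≤ (Real.sqrt (2 * π * 1))⁻¹ := by
          unfold gauss1
          have he : Real.exp (-(x - (p.1 + p.2) / 2 - 0) ^ 2 / (2 * 1)) ≤ 1 := by
            rw [Real.exp_le_one_iff]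
            nlinarith [sq_nonneg (x - (p.1 + p.2) / 2 - 0)]
          calc (Real.sqrt (2 * π * 1))⁻¹ * Real.exp (-(x - (p.1 + p.2) / 2 - 0) ^ 2 / (2 * 1))
              ≤ (Real.sqrt (2 * π * 1))⁻¹ * 1 := by
                exact mul_le_mul_of_nonneg_left he hC
            _ = (Real.sqrt (2 * π * 1))⁻¹ := by ring
        calc gauss1 0 1 (x - (p.1 + p.2) / 2) * gauss1 μ (σ ^ 2) p.1 * gauss1 μ (σ ^ 2) p.2
            = gauss1 0 1 (x - (p.1 + p.2) / 2) * (gauss1 μ (σ ^ 2) p.1 * gauss1 μ (σ ^ 2) p.2) := by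
              ring
          _ ≤ (Real.sqrt (2 * π * 1))⁻¹ * (gauss1 μ (σ ^ 2) p.1 * gauss1 μ (σ ^ 2) p.2) :=
              mul_le_mul_of_nonneg_right hle (mul_nonneg h1 h2)
    rw [MeasureTheory.Measure.volume_eq_prod ℝ ℝ, MeasureTheory.integral_prod _ hint]
    have hin : ∀ p1 : ℝ,
        (∫ p2, gauss1 0 1 (x - (p1 + p2) / 2) * gauss1 μ (σ ^ 2) p1 * gauss1 μ (σ ^ 2) p2)
          = gauss1 (μ / 2) (1 + σ ^ 2 / 4) (x - p1 / 2) * gauss1 μ (σ ^ 2) p1 := by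
      intro p1
      have hpt : ∀ p2 : ℝ, gauss1 0 1 (x - (p1 + p2) / 2) * gauss1 μ (σ ^ 2) p1
            * gauss1 μ (σ ^ 2) p2
          = gauss1 μ (σ ^ 2) p1 * (gauss1 0 1 ((x - p1 / 2) - p2 / 2) * gauss1 μ (σ ^ 2) p2) := by
        intro p2
        rw [show x - (p1 + p2) / 2 = (x - p1 / 2) - p2 / 2 by ring]
        ring
      simp_rw [hpt]
      rw [integral_const_mul, gauss1_half 0 one_pos μ hs2 (x - p1 / 2),
        show (0:ℝ) + μ / 2 = μ / 2 by ring, show (1:ℝ) + σ ^ 2 / 4 = 1 + σ ^ 2 / 4 from rfl]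
      ring
    simp_rw [hin]
    rw [gauss1_half (μ / 2) (by positivity) μ hs2 x,
      show μ / 2 + μ / 2 = μ by ring, show 1 + σ ^ 2 / 4 + σ ^ 2 / 4 = 1 + σ ^ 2 / 2 by ring]
  have hs' : (0:ℝ) < 1 + σ ^ 2 / 2 := by positivity
  have hk : (0:ℝ) < 1 + α * (1 + σ ^ 2 / 2) := by positivity
  refine ⟨Real.exp (-(μ ^ 2 * α) / (2 * (1 + α * (1 + σ ^ 2 / 2))))
    * (Real.sqrt (1 + α * (1 + σ ^ 2 / 2)))⁻¹, by positivity, fun x => ?_⟩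
  simp only [fisherT1, reprod1]
  rw [hnum x, hden, div_one]
  set s : ℝ := 1 + σ ^ 2 / 2 with hsdef
  set k : ℝ := 1 + α * s with hkdef
  have hsne := hs'.ne'
  have hkne := hk.ne'
  have hexp : -(α / 2 * x ^ 2) + -(x - μ) ^ 2 / (2 * s)
      = -(μ ^ 2 * α) / (2 * k) + -(x - μ / k) ^ 2 / (2 * (s / k)) := by
    rw [hkdef, hsdef]
    field_simp
    ring
  have hsqrt : Real.sqrt (2 * π * (s / k)) * Real.sqrt k = Real.sqrt (2 * π * s) := by
    rw [← Real.sqrt_mul (by positivity)]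
    congr 1
    field_simp
  unfold gauss1
  calc Real.exp (-(α / 2 * x ^ 2)) * ((Real.sqrt (2 * π * s))⁻¹ * Real.exp (-(x - μ) ^ 2 / (2 * s)))
      = (Real.sqrt (2 * π * s))⁻¹
          * Real.exp (-(α / 2 * x ^ 2) + -(x - μ) ^ 2 / (2 * s)) := by
        rw [Real.exp_add]; ring
    _ = (Real.sqrt (2 * π * s))⁻¹
          * Real.exp (-(μ ^ 2 * α) / (2 * k) + -(x - μ / k) ^ 2 / (2 * (s / k))) := by
        rw [hexp]
    _ = Real.exp (-(μ ^ 2 * α) / (2 * k)) * (Real.sqrt k)⁻¹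
          * ((Real.sqrt (2 * π * (s / k)))⁻¹ * Real.exp (-(x - μ / k) ^ 2 / (2 * (s / k)))) := by
        rw [Real.exp_add, ← hsqrt, mul_inv]
        ring

end
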